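/- Let X be an infinite, compact, zero-dimensional Hausdorff space and let G ≤ Homeo(X) be such that G = F(G). Suppose the action of G on X is compressible and minimal. Then the action of G on X is fully compressible, and G is generated by the rigid stabilisers rist_G(Y) over all G-compressible clopen subsets Y of X. -/
import Mathlib


open scoped Pointwise

namespace Paper

/-- The rigid stabiliser of `Y ⊆ X` in `G`: the pointwise stabiliser of `X ∖ Y`. -/
def rist (G : Type*) {X : Type*} [Group G] [MulAction G X] (Y : Set X) : Subgroup G where
  carrier := {g | ∀ x : X, x ∉ Y → g • x = x}
  one_mem' := fun x _ => one_smul G x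
  mul_mem' := by
    intro a b ha hb x hx
    rw [mul_smul, hb x hx, ha x hx]
  inv_mem' := by
    intro a ha x hx
    nth_rewrite 1 [← ha x hx]
    exact inv_smul_smul a x

/-- `Y` is compressible by the subgroup `H`: every non-empty open set contains an
`H`-translate of `Y`. -/
def CompressibleBy {G X : Type*} [Group G] [MulAction G X] [TopologicalSpace X]
    (H : Subgroup G) (Y : Set X) : Prop :=
  ∀ O : Set X, IsOpen O → O.Nonempty → ∃ h ∈ H, h • Y ⊆ O

/-- `G` (acting on `X`) equals its own piecewise full group: every homeomorphism of `X`
that locally agrees with elements of `G` is (induced by) an element of `G`. -/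
def IsPiecewiseFull (G X : Type*) [Group G] [MulAction G X] [TopologicalSpace X] : Prop :=
  ∀ φ : X ≃ₜ X,
    (∀ x : X, ∃ U : Set X, IsOpen U ∧ x ∈ U ∧ ∃ g : G, ∀ y ∈ U, φ y = g • y) →
    ∃ g : G, ∀ x : X, φ x = g • x

section Aux

set_option linter.unusedSectionVars false

variable {G X : Type*} [Group G] [TopologicalSpace X] [MulAction G X]

lemma aux_smul_preimage (g : G) (V : Set X) : g • V = (fun x : X => g⁻¹ • x) ⁻¹' V := by
  ext x; simp [Set.mem_smul_set_iff_inv_smul_mem]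

lemma aux_smul_clopen (hcont : ∀ g : G, Continuous fun x : X => g • x) (g : G) {V : Set X}
    (hV : IsClopen V) : IsClopen (g • V) := by
  rw [aux_smul_preimage]; exact hV.preimage (hcont g⁻¹)

lemma aux_smul_isOpen (hcont : ∀ g : G, Continuous fun x : X => g • x) (g : G) {V : Set X}
    (hV : IsOpen V) : IsOpen (g • V) := by
  rw [aux_smul_preimage]; exact hV.preimage (hcont g⁻¹)

lemma aux_mono {A B : Set X} (h : CompressibleBy (⊤ : Subgroup G) A) (hBA : B ⊆ A) :
    CompressibleBy (⊤ : Subgroup G) B := by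
  intro O hO hne
  obtain ⟨g, hg, hgA⟩ := h O hO hne
  exact ⟨g, hg, (Set.smul_set_mono hBA).trans hgA⟩

lemma aux_translate {A : Set X} (h : CompressibleBy (⊤ : Subgroup G) A) (g : G) :
    CompressibleBy (⊤ : Subgroup G) (g • A) := by
  intro O hO hne
  obtain ⟨k, _, hk⟩ := h O hO hne
  refine ⟨k * g⁻¹, trivial, ?_⟩
  rwa [smul_smul, inv_mul_cancel_right]

lemma aux_swap (hcont : ∀ g : G, Continuous fun x : X => g • x) (hpf : IsPiecewiseFull G X)
    {V : Set X} (hV : IsClopen V) (g : G) (hd : Disjoint V (g • V)) :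
    ∃ γ : G, (∀ x ∈ V, γ • x = g • x) ∧ ∀ x, x ∉ V → x ∉ g • V → γ • x = x := by
  classical
  have hgV : IsClopen (g • V) := aux_smul_clopen hcont g hV
  set f : X → X := fun x => if x ∈ V then g • x else if x ∈ g • V then g⁻¹ • x else x with hf
  have hfV : ∀ x ∈ V, f x = g • x := fun x hx => by simp [hf, hx]
  have hfgV : ∀ x ∈ g • V, f x = g⁻¹ • x := fun x hx => by
    have : x ∉ V := Set.disjoint_right.mp hd hx
    simp [hf, this, hx]
  have hfid : ∀ x, x ∉ V → x ∉ g • V → f x = x := fun x h1 h2 => by simp [hf, h1, h2]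
  have hinv : ∀ x, f (f x) = x := by
    intro x
    by_cases h1 : x ∈ V
    · rw [hfV x h1, hfgV _ (Set.smul_mem_smul_set h1), inv_smul_smul]
    · by_cases h2 : x ∈ g • V
      · rw [hfgV x h2, hfV _ (Set.mem_smul_set_iff_inv_smul_mem.mp h2), smul_inv_smul]
      · rw [hfid x h1 h2, hfid x h1 h2]
  have hcf : Continuous f := by
    rw [continuous_iff_continuousAt]
    intro x
    by_cases h1 : x ∈ V
    · exact ((hcont g).continuousAt).congr
        (Filter.eventuallyEq_of_mem (hV.isOpen.mem_nhds h1) (fun y hy => (hfV y hy).symm))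
    · by_cases h2 : x ∈ g • V
      · exact ((hcont g⁻¹).continuousAt).congr
          (Filter.eventuallyEq_of_mem (hgV.isOpen.mem_nhds h2) (fun y hy => (hfgV y hy).symm))
      · have hopen : IsOpen (V ∪ g • V)ᶜ := (hV.union hgV).isClosed.isOpen_compl
        have hmem : x ∈ (V ∪ g • V)ᶜ := by simp [h1, h2]
        exact continuousAt_id.congr
          (Filter.eventuallyEq_of_mem (hopen.mem_nhds hmem)
            (fun y hy => by
              simp only [Set.mem_compl_iff, Set.mem_union, not_or] at hy
              exact (hfid y hy.1 hy.2).symm))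
  let φ : X ≃ₜ X :=
    { toFun := f, invFun := f, left_inv := hinv, right_inv := hinv,
      continuous_toFun := hcf, continuous_invFun := hcf }
  have hφ : ∀ y : X, φ y = f y := fun y => rfl
  obtain ⟨γ, hγ⟩ := hpf φ (by
    intro x
    by_cases h1 : x ∈ V
    · exact ⟨V, hV.isOpen, h1, g, fun y hy => by rw [hφ, hfV y hy]⟩
    · by_cases h2 : x ∈ g • V
      · exact ⟨g • V, hgV.isOpen, h2, g⁻¹, fun y hy => by rw [hφ, hfgV y hy]⟩
      · refine ⟨(V ∪ g • V)ᶜ, (hV.union hgV).isClosed.isOpen_compl, by simp [h1, h2], 1,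
          fun y hy => ?_⟩
        simp only [Set.mem_compl_iff, Set.mem_union, not_or] at hy
        rw [hφ, hfid y hy.1 hy.2, one_smul])
  refine ⟨γ, fun x hx => ?_, fun x h1 h2 => ?_⟩
  · rw [← hγ x, hφ, hfV x hx]
  · rw [← hγ x, hφ, hfid x h1 h2]

lemma aux_cover [CompactSpace X] (hcont : ∀ g : G, Continuous fun x : X => g • x)
    (hmin : ∀ x : X, Dense (MulAction.orbit G x)) {U : Set X} (hU : IsOpen U)
    (hne : U.Nonempty) : ∃ t : Finset G, (Set.univ : Set X) ⊆ ⋃ g ∈ t, g • U := by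
  have hcov : (Set.univ : Set X) ⊆ ⋃ g : G, g • U := by
    intro x _
    obtain ⟨z, ⟨g, rfl⟩, hzU⟩ := (hmin x).exists_mem_open hU hne
    exact Set.mem_iUnion.mpr ⟨g⁻¹, Set.mem_smul_set_iff_inv_smul_mem.mpr (by simpa using hzU)⟩
  exact isCompact_univ.elim_finite_subcover _ (fun g => aux_smul_isOpen hcont g hU) hcov

lemma aux_not_isOpen_singleton [CompactSpace X] [Infinite X]
    (hcont : ∀ g : G, Continuous fun x : X => g • x)
    (hmin : ∀ x : X, Dense (MulAction.orbit G x)) (x : X) : ¬ IsOpen ({x} : Set X) := by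
  intro hx
  have horb : ∀ y : X, y ∈ MulAction.orbit G x := by
    intro y
    obtain ⟨z, ⟨g, rfl⟩, hz⟩ := (hmin y).exists_mem_open hx ⟨x, rfl⟩
    rw [Set.mem_singleton_iff] at hz
    exact ⟨g⁻¹, by simp only at hz ⊢; rw [← hz, inv_smul_smul]⟩
  have hall : ∀ y : X, IsOpen ({y} : Set X) := by
    intro y
    obtain ⟨g, rfl⟩ := horb y
    have : ({g • x} : Set X) = g • ({x} : Set X) := by simp [Set.smul_set_singleton]
    rw [this]
    exact aux_smul_isOpen hcont g hx
  obtain ⟨t, ht⟩ := isCompact_univ.elim_finite_subcover (fun y : X => ({y} : Set X))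
    hall (by intro y _; simp)
  have : (Set.univ : Set X).Finite := by
    refine Set.Finite.subset t.finite_toSet ?_
    intro y hy
    obtain ⟨z, hz, hz'⟩ := Set.mem_iUnion₂.mp (ht hy)
    rw [Set.mem_singleton_iff] at hz'
    exact hz' ▸ hz
  exact Set.infinite_univ this

lemma aux_split [T2Space X] [CompactSpace X] [Infinite X]
    (hbasis : TopologicalSpace.IsTopologicalBasis {U : Set X | IsClopen U})
    (hcont : ∀ g : G, Continuous fun x : X => g • x)
    (hmin : ∀ x : X, Dense (MulAction.orbit G x))
    {V : Set X} (hV : IsClopen V) (hne : V.Nonempty) :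
    ∃ V₁ V₂ : Set X, IsClopen V₁ ∧ IsClopen V₂ ∧ V₁.Nonempty ∧ V₂.Nonempty ∧
      V₁ ⊆ V ∧ V₂ ⊆ V ∧ Disjoint V₁ V₂ := by
  obtain ⟨x, hx⟩ := hne
  have : ∃ y ∈ V, y ≠ x := by
    by_contra h
    push_neg at h
    have : V = {x} := Set.eq_singleton_iff_unique_mem.mpr ⟨hx, h⟩
    exact aux_not_isOpen_singleton (G := G) hcont hmin x (this ▸ hV.isOpen)
  obtain ⟨y, hy, hyx⟩ := this
  obtain ⟨W₁, W₂, hW₁, hW₂, hxW₁, hyW₂, hWd⟩ := t2_separation (Ne.symm hyx)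
  obtain ⟨V₁, hV₁, hxV₁, hV₁s⟩ := hbasis.exists_subset_of_mem_open
    (Set.mem_inter hx hxW₁) (hV.isOpen.inter hW₁)
  refine ⟨V₁, V \ V₁, hV₁, hV.diff hV₁, ⟨x, hxV₁⟩, ⟨y, hy, fun hyV₁ => ?_⟩,
    fun z hz => (hV₁s hz).1, Set.diff_subset, Set.disjoint_sdiff_right⟩
  exact Set.disjoint_left.mp hWd (hV₁s hyV₁).2 hyW₂

/-- The key union lemma: if `A`, `B` are compressible clopen sets and there is a nonempty
compressible clopen `R` disjoint from `A ∪ B`, then `A ∪ B` is compressible. -/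
lemma aux_union [T2Space X] [CompactSpace X] [Infinite X]
    (hbasis : TopologicalSpace.IsTopologicalBasis {U : Set X | IsClopen U})
    (hcont : ∀ g : G, Continuous fun x : X => g • x) (hpf : IsPiecewiseFull G X)
    (hmin : ∀ x : X, Dense (MulAction.orbit G x))
    {A B R : Set X} (hA : IsClopen A) (hcA : CompressibleBy (⊤ : Subgroup G) A)
    (hB : IsClopen B) (hcB : CompressibleBy (⊤ : Subgroup G) B)
    (hR : IsClopen R) (hRne : R.Nonempty) (hcR : CompressibleBy (⊤ : Subgroup G) R)
    (hd : Disjoint R (A ∪ B)) : CompressibleBy (⊤ : Subgroup G) (A ∪ B) := by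
  intro O hO hOne
  obtain ⟨R₁, R₂, hR₁, hR₂, hR₁ne, hR₂ne, hR₁s, hR₂s, hR₁₂⟩ :=
    aux_split (G := G) hbasis hcont hmin hR hRne
  have hdA : Disjoint R A := hd.mono_right Set.subset_union_left
  have hdB : Disjoint R B := hd.mono_right Set.subset_union_right
  obtain ⟨a, -, ha⟩ := hcA R₁ hR₁.isOpen hR₁ne
  obtain ⟨b, -, hb⟩ := hcB R₂ hR₂.isOpen hR₂ne
  have hdaA : Disjoint A (a • A) :=
    Set.disjoint_left.mpr fun x hx hx' =>
      Set.disjoint_left.mp (hdA.mono_left hR₁s) (ha hx') hx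
  have hdbB : Disjoint B (b • B) :=
    Set.disjoint_left.mpr fun x hx hx' =>
      Set.disjoint_left.mp (hdB.mono_left hR₂s) (hb hx') hx
  obtain ⟨γ₁, hγ₁, hγ₁'⟩ := aux_swap hcont hpf hA a hdaA
  obtain ⟨γ₂, hγ₂, hγ₂'⟩ := aux_swap hcont hpf hB b hdbB
  obtain ⟨k, -, hk⟩ := hcR O hO hOne
  refine ⟨k * γ₂ * γ₁, trivial, ?_⟩
  intro y hy
  obtain ⟨x, hx, rfl⟩ := hy
  have hxR : ∀ z ∈ R, k • z ∈ O := fun z hz => hk (Set.smul_mem_smul_set hz)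
  show (k * γ₂ * γ₁) • x ∈ O
  rw [mul_smul, mul_smul]
  rcases hx with hxA | hxB
  · -- x ∈ A : γ₁ sends it into R₁, γ₂ fixes it there, k sends it into O
    rw [hγ₁ x hxA]
    have hmem : a • x ∈ R₁ := ha (Set.smul_mem_smul_set hxA)
    have h1 : a • x ∉ B := fun h => (hdB.mono_left hR₁s).le_bot ⟨hmem, h⟩
    have h2 : a • x ∉ b • B := fun h => hR₁₂.le_bot ⟨hmem, hb h⟩
    rw [hγ₂' _ h1 h2]
    exact hxR _ (hR₁s hmem)
  · by_cases hxA : x ∈ A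
    · rw [hγ₁ x hxA]
      have hmem : a • x ∈ R₁ := ha (Set.smul_mem_smul_set hxA)
      have h1 : a • x ∉ B := fun h => (hdB.mono_left hR₁s).le_bot ⟨hmem, h⟩
      have h2 : a • x ∉ b • B := fun h => hR₁₂.le_bot ⟨hmem, hb h⟩
      rw [hγ₂' _ h1 h2]
      exact hxR _ (hR₁s hmem)
    · -- x ∈ B \ A : γ₁ fixes x, γ₂ sends it into R₂, k sends it into O
      rw [hγ₁' x hxA (fun h => Set.disjoint_left.mp hdB (hR₁s (ha h)) hxB)]
      rw [hγ₂ x hxB]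
      exact hxR _ (hR₂s (hb (Set.smul_mem_smul_set hxB)))

end Aux

/-- Lemma: let `X` be an infinite compact zero-dimensional Hausdorff space and `G` a
piecewise full group of homeomorphisms of `X` with compressible minimal action.  Then
the action is fully compressible and `G` is generated by the rigid stabilisers of
`G`-compressible clopen sets. -/
theorem minimal_compressible_fully_compressible {G X : Type*} [Group G]
    [TopologicalSpace X] [T2Space X] [Infinite X] [CompactSpace X]
    [MulAction G X] [FaithfulSMul G X]
    (hbasis : TopologicalSpace.IsTopologicalBasis {U : Set X | IsClopen U})
    (hcont : ∀ g : G, Continuous fun x : X => g • x)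
    (hpf : IsPiecewiseFull G X)
    (hcompr : ∃ Y : Set X, IsOpen Y ∧ Y.Nonempty ∧ CompressibleBy (⊤ : Subgroup G) Y)
    (hmin : ∀ x : X, Dense (MulAction.orbit G x)) :
    (∀ O : Set X, IsOpen O → ¬ Dense O → CompressibleBy (⊤ : Subgroup G) O) ∧
      (⊤ : Subgroup G) =
        ⨆ Y ∈ {Y : Set X | IsClopen Y ∧ CompressibleBy (⊤ : Subgroup G) Y}, rist G Y := by
  classical
  -- a nonempty compressible clopen set U
  obtain ⟨Y, hYo, ⟨y₀, hy₀⟩, hcY⟩ := hcompr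
  obtain ⟨U, hUc, hy₀U, hUY⟩ := hbasis.exists_subset_of_mem_open hy₀ hYo
  have hUc : IsClopen U := hUc
  have hcU : CompressibleBy (⊤ : Subgroup G) U := aux_mono hcY hUY
  have hUne : U.Nonempty := ⟨y₀, hy₀U⟩
  -- finitely many translates of U cover X
  obtain ⟨t, ht⟩ := aux_cover hcont hmin hUc.isOpen hUne
  -- every clopen set with nonempty complement is compressible
  have key : ∀ C : Set X, IsClopen C → Cᶜ.Nonempty → CompressibleBy (⊤ : Subgroup G) C := by
    intro C hC hCc
    obtain ⟨k, -, hkU⟩ := hcU Cᶜ hC.isClosed.isOpen_compl hCc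
    set R : Set X := k • U with hRdef
    have hRclopen : IsClopen R := aux_smul_clopen hcont k hUc
    have hRne : R.Nonempty := ⟨k • y₀, Set.smul_mem_smul_set hy₀U⟩
    have hcR : CompressibleBy (⊤ : Subgroup G) R := aux_translate hcU k
    have hRC : Disjoint R C := Set.disjoint_left.mpr fun x hx => hkU hx
    have ind : ∀ s : Finset G, IsClopen (⋃ g ∈ s, C ∩ g • U) ∧
        CompressibleBy (⊤ : Subgroup G) (⋃ g ∈ s, C ∩ g • U) := by
      intro s
      induction s using Finset.induction_on with
      | empty =>
        refine ⟨by simp [isClopen_empty], ?_⟩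
        intro O hO hne
        exact ⟨1, trivial, by simp⟩
      | @insert g s hg ih =>
        rw [Finset.set_biUnion_insert]
        have hAclopen : IsClopen (C ∩ g • U) := hC.inter (aux_smul_clopen hcont g hUc)
        have hAc : CompressibleBy (⊤ : Subgroup G) (C ∩ g • U) :=
          aux_mono (aux_translate hcU g) Set.inter_subset_right
        have hsubC : (C ∩ g • U) ∪ ⋃ g' ∈ s, C ∩ g' • U ⊆ C := by
          intro x hx
          rcases hx with hx | hx
          · exact hx.1
          · obtain ⟨g', -, hx'⟩ := Set.mem_iUnion₂.mp hx
            exact hx'.1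
        refine ⟨hAclopen.union ih.1, ?_⟩
        exact aux_union hbasis hcont hpf hmin hAclopen hAc ih.1 ih.2 hRclopen hRne hcR
          (hRC.mono_right hsubC)
    have hCsub : C ⊆ ⋃ g ∈ t, C ∩ g • U := by
      intro x hx
      obtain ⟨g, hg, hx'⟩ := Set.mem_iUnion₂.mp (ht (Set.mem_univ x))
      exact Set.mem_iUnion₂.mpr ⟨g, hg, hx, hx'⟩
    exact aux_mono (ind t).2 hCsub
  -- part (1): every non-dense open set is compressible
  have part1 : ∀ O : Set X, IsOpen O → ¬ Dense O → CompressibleBy (⊤ : Subgroup G) O := by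
    intro O hO hnd
    have : ∃ z, z ∉ closure O := by
      by_contra h
      push_neg at h
      exact hnd fun x => h x
    obtain ⟨z, hz⟩ := this
    obtain ⟨K, hKc, hzK, hKs⟩ := hbasis.exists_subset_of_mem_open
      (show z ∈ (closure O)ᶜ from hz) isClosed_closure.isOpen_compl
    have hKc : IsClopen K := hKc
    have hOsub : O ⊆ Kᶜ := fun w hw hKw => hKs hKw (subset_closure hw)
    refine aux_mono (key Kᶜ hKc.compl ?_) hOsub
    rw [compl_compl]
    exact ⟨z, hzK⟩
  refine ⟨part1, ?_⟩
  -- part (2): G is generated by rigid stabilisers of compressible clopen sets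
  symm
  rw [eq_top_iff]
  intro g _
  by_cases hg1 : ∀ x : X, g • x = x
  · have : g = 1 := eq_of_smul_eq_smul (M := G) (α := X) (fun x => by rw [hg1 x, one_smul])
    rw [this]
    exact Subgroup.one_mem _
  push_neg at hg1
  obtain ⟨x, hgx⟩ := hg1
  -- find a third point z distinct from x and g • x
  obtain ⟨z, hzx, hzgx⟩ : ∃ z : X, z ≠ x ∧ z ≠ g • x := by
    have : ({x, g • x} : Set X).Finite := (Set.finite_singleton (g • x)).insert x
    obtain ⟨z, hz⟩ := Set.Infinite.nonempty (Set.infinite_univ.diff this)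
    refine ⟨z, fun h => hz.2 ?_, fun h => hz.2 ?_⟩ <;> simp [h]
  -- separate x, g•x, z
  obtain ⟨W₁, W₂, hW₁, hW₂, hxW₁, hgxW₂, hd₁₂⟩ := t2_separation (Ne.symm hgx)
  obtain ⟨W₃, W₄, hW₃, hW₄, hzW₃, hxW₄, hd₃₄⟩ := t2_separation hzx
  obtain ⟨W₅, W₆, hW₅, hW₆, hzW₅, hgxW₆, hd₅₆⟩ := t2_separation hzgx
  have hNopen : IsOpen (W₁ ∩ W₄ ∩ (fun w : X => g • w) ⁻¹' (W₂ ∩ W₆)) :=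
    (hW₁.inter hW₄).inter ((hW₂.inter hW₆).preimage (hcont g))
  have hxN : x ∈ W₁ ∩ W₄ ∩ (fun w : X => g • w) ⁻¹' (W₂ ∩ W₆) :=
    ⟨⟨hxW₁, hxW₄⟩, hgxW₂, hgxW₆⟩
  obtain ⟨V, hVc, hxV, hVs⟩ := hbasis.exists_subset_of_mem_open hxN hNopen
  have hVc : IsClopen V := hVc
  have hVne : V.Nonempty := ⟨x, hxV⟩
  have hgVsub : g • V ⊆ W₂ ∩ W₆ := by
    intro w hw
    obtain ⟨v, hv, rfl⟩ := hw
    exact (hVs hv).2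
  have hdV : Disjoint V (g • V) := Set.disjoint_left.mpr fun w hw hw' =>
    Set.disjoint_left.mp hd₁₂ (hVs hw).1.1 (hgVsub hw').1
  have hzV : z ∉ V := fun h => Set.disjoint_left.mp hd₃₄ hzW₃ (hVs h).1.2
  have hzgV : z ∉ g • V := fun h => Set.disjoint_left.mp hd₅₆ hzW₅ (hgVsub h).2
  obtain ⟨γ, hγ, hγ'⟩ := aux_swap hcont hpf hVc g hdV
  -- γ ∈ rist (V ∪ g•V),  γ⁻¹ * g ∈ rist (Vᶜ)
  have hγmem : γ ∈ rist G (V ∪ g • V) := by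
    intro w hw
    rw [Set.mem_union, not_or] at hw
    exact hγ' w hw.1 hw.2
  have hkmem : γ⁻¹ * g ∈ rist G Vᶜ := by
    intro w hw
    rw [Set.mem_compl_iff, not_not] at hw
    rw [mul_smul, ← hγ w hw, inv_smul_smul]
  -- both supports are compressible clopen sets
  have hY₁ : (V ∪ g • V) ∈ {Y : Set X | IsClopen Y ∧ CompressibleBy (⊤ : Subgroup G) Y} := by
    refine ⟨hVc.union (aux_smul_clopen hcont g hVc), key _ (hVc.union (aux_smul_clopen hcont g hVc)) ⟨z, ?_⟩⟩
    rw [Set.mem_compl_iff, Set.mem_union, not_or]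
    exact ⟨hzV, hzgV⟩
  have hY₂ : (Vᶜ : Set X) ∈ {Y : Set X | IsClopen Y ∧ CompressibleBy (⊤ : Subgroup G) Y} := by
    refine ⟨hVc.compl, key _ hVc.compl ?_⟩
    rw [compl_compl]
    exact hVne
  have hmem₁ : γ ∈ ⨆ Y ∈ {Y : Set X | IsClopen Y ∧ CompressibleBy (⊤ : Subgroup G) Y}, rist G Y :=
    Subgroup.mem_iSup_of_mem _ (Subgroup.mem_iSup_of_mem hY₁ hγmem)
  have hmem₂ : γ⁻¹ * g ∈ ⨆ Y ∈ {Y : Set X | IsClopen Y ∧ CompressibleBy (⊤ : Subgroup G) Y},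
      rist G Y :=
    Subgroup.mem_iSup_of_mem _ (Subgroup.mem_iSup_of_mem hY₂ hkmem)
  have : g = γ * (γ⁻¹ * g) := by rw [← mul_assoc, mul_inv_cancel, one_mul]
  rw [this]
  exact Subgroup.mul_mem _ hmem₁ hmem₂

end Paper
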